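/- For every real p with 1/2 ≤ p ≤ 1 and every n ≥ 0, one has 0 ≤ C_n(p) ≤ 1/2 and 0 ≤ D_n(p) ≤ 1. -/
import Mathlib


/-- For 1/2 ≤ p ≤ 1, the Fitch quantities satisfy 0 ≤ C_n ≤ 1/2 and 0 ≤ D_n ≤ 1. -/
theorem fitch_CD_bounds
    (p : ℝ) (C D : ℕ → ℝ)
    (hC0 : C 0 = 0) (hD0 : D 0 = 1)
    (hC : ∀ n, 2 * C (n + 1) =
        1 - 2 * C n + 3 * (C n) ^ 2 - (2 * p - 1) ^ 2 * (D n) ^ 2)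
    (hD : ∀ n, D (n + 1) = (2 * p - 1) * (1 + C n) * D n)
    (hp1 : 1 / 2 ≤ p) (hp2 : p ≤ 1) :
    ∀ n : ℕ, (0 ≤ C n ∧ C n ≤ 1 / 2) ∧ (0 ≤ D n ∧ D n ≤ 1) := by
  have hq0 : 0 ≤ 2 * p - 1 := by linarith
  have hq1 : 2 * p - 1 ≤ 1 := by linarith
  have key : ∀ n : ℕ, 0 ≤ C n ∧ C n ≤ 1 / 2 ∧ 0 ≤ D n ∧ C n + D n ≤ 1 := by
    intro n
    induction n with
    | zero => refine ⟨by rw [hC0], by rw [hC0]; norm_num, by rw [hD0]; norm_num,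
        by rw [hC0, hD0]; norm_num⟩
    | succ n ih =>
      obtain ⟨h1, h2, h3, h4⟩ := ih
      have hCrec := hC n
      have hDrec := hD n
      have ht : (2 * p - 1) * D n ≤ 1 - C n := by nlinarith
      have ht0 : 0 ≤ (2 * p - 1) * D n := mul_nonneg hq0 h3
      refine ⟨?_, ?_, ?_, ?_⟩
      · nlinarith [sq_nonneg (1 - C n - (2 * p - 1) * D n), sq_nonneg (C n)]
      · nlinarith [sq_nonneg ((2 * p - 1) * D n)]
      · rw [hDrec]; positivity
      · rw [hDrec]
        nlinarith [mul_nonneg (sub_nonneg.mpr ht)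
          (sub_nonneg.mpr (le_trans ht (by linarith : (1:ℝ) - C n ≤ 1 + 3 * C n)))]
  intro n
  obtain ⟨h1, h2, h3, h4⟩ := key n
  exact ⟨⟨h1, h2⟩, h3, by linarith⟩
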